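/- (Theorem 1, finite-sample part.) In the two-task Gaussian model with any ρ ∈ [0, 1] (in particular ρ = 1/2), for any n ≥ 2, let (A^i_k, A^j_k, Y_{i,k}), k = 1, …, n, be i.i.d. copies of (A^i, A^j, Y_i). Then almost surely the empirical Gram matrix Σ̂ = (1/n)∑_k (A^i_k, A^j_k)(A^i_k, A^j_k)ᵀ is invertible and the unique empirical least-squares minimizer (ŵ₁, ŵ₂) = Σ̂^{−1}·v̂, with v̂ = (1/n)∑_k Y_{i,k}·(A^i_k, A^j_k), satisfies ŵ₂ ≠ 0; that is, the optimal classifier trained on finitely many samples places nonzero weight on the non-causal feature almost surely. -/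

import Mathlib

open MeasureTheory ProbabilityTheory
open scoped ENNReal

lemma mvpoly_null_fin : ∀ (m : ℕ) (μ : Fin m → Measure ℝ),
    (∀ i, IsProbabilityMeasure (μ i)) → (∀ i, μ i ≪ volume) →
    ∀ (p : MvPolynomial (Fin m) ℝ), p ≠ 0 →
    Measure.pi μ {x | MvPolynomial.eval x p = 0} = 0 := by
  intro m
  induction m with
  | zero =>
    intro μ hprob hac p hp
    obtain ⟨c, rfl⟩ := MvPolynomial.C_surjective (Fin 0) p
    have hc : c ≠ 0 := fun h => hp (by simp [h])
    have : {x : Fin 0 → ℝ | MvPolynomial.eval x (MvPolynomial.C c) = 0} = ∅ := by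
      ext x; simp [hc]
    rw [this]; simp
  | succ m ih =>
    intro μ hprob hac p hp
    haveI : ∀ i, IsProbabilityMeasure (μ i) := hprob
    set q := MvPolynomial.finSuccEquiv ℝ m p with hqdef
    have hq : q ≠ 0 := by
      intro h
      apply hp
      have := congrArg (MvPolynomial.finSuccEquiv ℝ m).symm h
      simpa [hqdef] using this
    have hcoeff : ∃ k, q.coeff k ≠ 0 := by
      by_contra h
      push_neg at h
      exact hq (Polynomial.ext fun k => by simp [h k])
    obtain ⟨k, hk⟩ := hcoeff
    set νm : Measure (Fin m → ℝ) := Measure.pi fun j => μ ((0 : Fin (m+1)).succAbove j) with hνm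
    have hmp := measurePreserving_piFinSuccAbove μ 0
    set S : Set (ℝ × (Fin m → ℝ)) :=
      {z | MvPolynomial.eval (Fin.cons z.1 z.2) p = 0} with hSdef
    have hconsm : Measurable fun z : ℝ × (Fin m → ℝ) => (Fin.cons z.1 z.2 : Fin (m+1) → ℝ) := by
      rw [measurable_pi_iff]
      intro i
      refine Fin.cases ?_ ?_ i
      · simpa using measurable_fst
      · intro j; simp; exact (measurable_pi_apply j).comp measurable_snd
    have hSm : MeasurableSet S := by
      have : S = (fun z : ℝ × (Fin m → ℝ) => MvPolynomial.eval (Fin.cons z.1 z.2) p) ⁻¹' {0} := rfl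
      rw [this]
      exact ((MvPolynomial.continuous_eval p).measurable.comp hconsm) (measurableSet_singleton 0)
    have hZ : Measure.pi μ {x | MvPolynomial.eval x p = 0} = ((μ 0).prod νm) S := by
      rw [← hmp.measure_preimage hSm.nullMeasurableSet]
      congr 1
      ext x
      simp only [Set.mem_preimage, Set.mem_setOf_eq, hSdef]
      have hcx : (Fin.cons ((MeasurableEquiv.piFinSuccAbove (fun _ => ℝ) 0) x).1
          ((MeasurableEquiv.piFinSuccAbove (fun _ => ℝ) 0) x).2 : Fin (m+1) → ℝ) = x := by
        funext i
        refine Fin.cases ?_ ?_ i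
        · rfl
        · intro j
          simp [MeasurableEquiv.piFinSuccAbove, Fin.insertNthEquiv, Fin.removeNth,
            Fin.succAbove_zero, Fin.tail]
      rw [hcx]
    rw [hZ]
    have hswap : ((μ 0).prod νm) S = (νm.prod (μ 0)) (Prod.swap ⁻¹' S) := by
      rw [← Measure.prod_swap, Measure.map_apply measurable_swap hSm]
    rw [hswap]
    have hS'm : MeasurableSet (Prod.swap ⁻¹' S) := measurable_swap hSm
    rw [Measure.measure_prod_null hS'm]
    have hIH : νm {s | MvPolynomial.eval s (q.coeff k) = 0} = 0 :=
      ih _ (fun j => hprob _) (fun j => hac _) (q.coeff k) hk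
    have hae : ∀ᵐ s ∂νm, MvPolynomial.eval s (q.coeff k) ≠ 0 := by
      rw [ae_iff]
      simpa using hIH
    filter_upwards [hae] with s hs
    have hr : (q.map (MvPolynomial.eval s)) ≠ 0 := by
      intro h
      apply hs
      have := congrArg (fun r => Polynomial.coeff r k) h
      simpa [Polynomial.coeff_map] using this
    have hfin : Set.Finite {y : ℝ | Polynomial.eval y (q.map (MvPolynomial.eval s)) = 0} :=
      Polynomial.finite_setOf_isRoot hr
    have hsub : Prod.mk s ⁻¹' (Prod.swap ⁻¹' S) = {y : ℝ | Polynomial.eval y (q.map (MvPolynomial.eval s)) = 0} := by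
      ext y
      simp only [Set.mem_preimage, Set.mem_setOf_eq, hSdef, Prod.swap]
      rw [MvPolynomial.eval_eq_eval_mv_eval']
    simp only [Pi.zero_apply]
    rw [hsub]
    exact hac 0 (hfin.measure_zero volume)

lemma mvpoly_null {ι : Type*} [Fintype ι] (μ : ι → Measure ℝ)
    (hprob : ∀ i, IsProbabilityMeasure (μ i)) (hac : ∀ i, μ i ≪ volume)
    (p : MvPolynomial ι ℝ) (hp : p ≠ 0) :
    Measure.pi μ {x | MvPolynomial.eval x p = 0} = 0 := by
  classical
  haveI := hprob
  set m := Fintype.card ι with hm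
  set e : Fin m ≃ ι := (Fintype.equivFin ι).symm with he
  set q : MvPolynomial (Fin m) ℝ := MvPolynomial.rename e.symm p with hqdef
  have hq : q ≠ 0 := by
    intro h
    apply hp
    have := MvPolynomial.rename_injective (R := ℝ) (⇑e.symm) e.symm.injective
    apply this
    simpa [hqdef] using h
  have hmp := measurePreserving_arrowCongr' (fun i : Fin m => μ (e i)) μ e
      (MeasurableEquiv.refl ℝ) (fun i => by exact MeasurePreserving.id (μ (e i)))
  have hfin := mvpoly_null_fin m (fun i => μ (e i)) (fun i => hprob _) (fun i => hac _) q hq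
  have hSm : MeasurableSet {x : ι → ℝ | MvPolynomial.eval x p = 0} :=
    ((MvPolynomial.continuous_eval p).measurable) (measurableSet_singleton 0)
  rw [← hmp.measure_preimage hSm.nullMeasurableSet]
  have hpre : (⇑(MeasurableEquiv.arrowCongr' e (MeasurableEquiv.refl ℝ))) ⁻¹'
      {x : ι → ℝ | MvPolynomial.eval x p = 0} = {x : Fin m → ℝ | MvPolynomial.eval x q = 0} := by
    ext x
    simp only [Set.mem_preimage, Set.mem_setOf_eq, hqdef, MvPolynomial.eval_rename]
    have : (⇑(MeasurableEquiv.arrowCongr' e (MeasurableEquiv.refl ℝ)) x) = x ∘ e.symm := by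
      funext i
      simp [MeasurableEquiv.arrowCongr', Equiv.arrowCongr']
    rw [this]
  rw [hpre]
  exact hfin


lemma map_pi_of_iIndep {Ω : Type*} [MeasurableSpace Ω] (P : Measure Ω) [IsProbabilityMeasure P]
    {n : ℕ} {β : Type*} [MeasurableSpace β] (X : Fin n → Ω → β) (hm : ∀ k, Measurable (X k))
    (h : iIndepFun X P) :
    Measure.map (fun ω k => X k ω) P = Measure.pi (fun k => Measure.map (X k) P) := by
  haveI : ∀ k, IsProbabilityMeasure (Measure.map (X k) P) :=
    fun k => Measure.isProbabilityMeasure_map (hm k).aemeasurable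
  refine (Measure.pi_eq fun s hs => ?_).symm
  rw [Measure.map_apply (measurable_pi_lambda _ hm) (MeasurableSet.univ_pi hs)]
  have hpre : (fun ω k => X k ω) ⁻¹' (Set.pi Set.univ s) = ⋂ k ∈ Finset.univ, X k ⁻¹' s k := by
    ext ω; simp [Set.mem_pi]
  rw [hpre, h.measure_inter_preimage_eq_mul Finset.univ (fun k _ => hs k)]
  exact Finset.prod_congr rfl fun k _ => (Measure.map_apply (hm k) (hs k)).symm

noncomputable def Dfun {n : ℕ} (x : Fin n → ℝ × ℝ × ℝ) : ℝ :=
  (∑ k, (x k).1 * (x k).1) * (∑ k, (x k).2.1 * (x k).2.1) -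
  (∑ k, (x k).1 * (x k).2.1) * (∑ k, (x k).1 * (x k).2.1)

noncomputable def Nfun {n : ℕ} (x : Fin n → ℝ × ℝ × ℝ) : ℝ :=
  (∑ k, (x k).1 * (x k).1) * (∑ k, (x k).2.2 * (x k).2.1) -
  (∑ k, (x k).1 * (x k).2.1) * (∑ k, (x k).2.2 * (x k).1)

lemma measurable_Dfun {n : ℕ} : Measurable (Dfun (n := n)) := by
  apply Measurable.sub <;> apply Measurable.mul <;>
    exact Finset.measurable_sum _ fun k _ => by
      apply Measurable.mul <;> fun_prop

lemma measurable_Nfun {n : ℕ} : Measurable (Nfun (n := n)) := by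
  apply Measurable.sub <;> apply Measurable.mul <;>
    exact Finset.measurable_sum _ fun k _ => by
      apply Measurable.mul <;> fun_prop

lemma slice_poly (n : ℕ) (hn : 2 ≤ n) (a b : ℝ) (d : Fin n → ℝ × ℝ)
    (hd : ∀ k, (d k).1 = 1 ∨ (d k).1 = -1) :
    ∃ q : MvPolynomial (Fin n ⊕ Fin n) ℝ, q ≠ 0 ∧
      ∀ z : Fin n ⊕ Fin n → ℝ,
        MvPolynomial.eval z q =
          Dfun (fun k => (a * (d k).1 + z (.inl k), b * ((d k).2 * (d k).1) + z (.inr k), (d k).1)) *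
          Nfun (fun k => (a * (d k).1 + z (.inl k), b * ((d k).2 * (d k).1) + z (.inr k), (d k).1)) := by
  classical
  set Ai : Fin n → MvPolynomial (Fin n ⊕ Fin n) ℝ :=
    fun k => MvPolynomial.C (a * (d k).1) + MvPolynomial.X (.inl k) with hAi
  set Aj : Fin n → MvPolynomial (Fin n ⊕ Fin n) ℝ :=
    fun k => MvPolynomial.C (b * ((d k).2 * (d k).1)) + MvPolynomial.X (.inr k) with hAj
  set s11 : MvPolynomial (Fin n ⊕ Fin n) ℝ := ∑ k, Ai k * Ai k with hs11
  set s12 : MvPolynomial (Fin n ⊕ Fin n) ℝ := ∑ k, Ai k * Aj k with hs12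
  set s22 : MvPolynomial (Fin n ⊕ Fin n) ℝ := ∑ k, Aj k * Aj k with hs22
  set t1 : MvPolynomial (Fin n ⊕ Fin n) ℝ := ∑ k, MvPolynomial.C ((d k).1) * Ai k with ht1
  set t2 : MvPolynomial (Fin n ⊕ Fin n) ℝ := ∑ k, MvPolynomial.C ((d k).1) * Aj k with ht2
  refine ⟨(s11 * s22 - s12 * s12) * (s11 * t2 - s12 * t1), ?_, ?_⟩
  · -- nonzero: evaluate at a witness
    set k0 : Fin n := ⟨0, by omega⟩ with hk0
    set k1 : Fin n := ⟨1, by omega⟩ with hk1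
    have hk01 : k0 ≠ k1 := by simp [hk0, hk1, Fin.ext_iff]
    set z : Fin n ⊕ Fin n → ℝ := Sum.elim
      (fun k => (if k = k0 then (1:ℝ) else 0) - a * (d k).1)
      (fun k => (if k = k1 then (1:ℝ) else 0) - b * ((d k).2 * (d k).1)) with hz
    intro h0
    have hAiev : ∀ k, MvPolynomial.eval z (Ai k) = (if k = k0 then (1:ℝ) else 0) := by
      intro k; simp [hAi, hz]
    have hAjev : ∀ k, MvPolynomial.eval z (Aj k) = (if k = k1 then (1:ℝ) else 0) := by
      intro k; simp [hAj, hz]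
    have hs11e : MvPolynomial.eval z s11 = 1 := by
      rw [hs11, map_sum]
      simp_rw [map_mul, hAiev, ite_mul, one_mul, zero_mul]
      simp [Finset.sum_ite_eq']
    have hs22e : MvPolynomial.eval z s22 = 1 := by
      rw [hs22, map_sum]
      simp_rw [map_mul, hAjev, ite_mul, one_mul, zero_mul]
      simp [Finset.sum_ite_eq']
    have hs12e : MvPolynomial.eval z s12 = 0 := by
      rw [hs12, map_sum]
      refine Finset.sum_eq_zero fun k _ => ?_
      rw [map_mul, hAiev, hAjev]
      by_cases h : k = k0
      · subst h; simp [hk01]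
      · simp [h]
    have ht1e : MvPolynomial.eval z t1 = (d k0).1 := by
      rw [ht1, map_sum]
      simp_rw [map_mul, MvPolynomial.eval_C, hAiev, mul_ite, mul_one, mul_zero]
      simp [Finset.sum_ite_eq']
    have ht2e : MvPolynomial.eval z t2 = (d k1).1 := by
      rw [ht2, map_sum]
      simp_rw [map_mul, MvPolynomial.eval_C, hAjev, mul_ite, mul_one, mul_zero]
      simp [Finset.sum_ite_eq']
    have hdk1 : (d k1).1 ≠ 0 := by
      rcases hd k1 with h | h <;> rw [h] <;> norm_num
    have heval : MvPolynomial.eval z ((s11 * s22 - s12 * s12) * (s11 * t2 - s12 * t1)) = (d k1).1 := by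
      simp only [map_mul, map_sub, hs11e, hs22e, hs12e, ht1e, ht2e]
      ring
    rw [h0, map_zero] at heval
    exact hdk1 heval.symm
  · intro z
    simp only [Dfun, Nfun, map_mul, map_sub, map_sum, map_add, MvPolynomial.eval_C,
      MvPolynomial.eval_X, hs11, hs12, hs22, ht1, ht2, hAi, hAj]

lemma deterministic_part
    {n : ℕ} (hn : 2 ≤ n) (A B Y : Fin n → ℝ)
    (Sig : Matrix (Fin 2) (Fin 2) ℝ)
    (hSig : Sig = (n : ℝ)⁻¹ • ∑ k : Fin n, Matrix.of fun p q : Fin 2 =>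
      ![A k, B k] p * ![A k, B k] q)
    (v : Fin 2 → ℝ) (hv : v = (n : ℝ)⁻¹ • ∑ k : Fin n, Y k • ![A k, B k])
    (L : (Fin 2 → ℝ) → ℝ)
    (hL : ∀ w : Fin 2 → ℝ, L w = (n : ℝ)⁻¹ * ∑ k, (Y k - w 0 * A k - w 1 * B k)^2)
    (hD : Dfun (fun k => (A k, B k, Y k)) ≠ 0)
    (hN : Nfun (fun k => (A k, B k, Y k)) ≠ 0) :
    IsUnit Sig ∧ (∀ w : Fin 2 → ℝ, (∀ u, L w ≤ L u) ↔ w = Sig⁻¹.mulVec v) ∧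
      (Sig⁻¹.mulVec v) 1 ≠ 0 := by
  have hn0 : (0:ℝ) < (n:ℝ) := by
    have : 0 < n := lt_of_lt_of_le (by norm_num) hn
    exact_mod_cast this
  have hnne : (n:ℝ) ≠ 0 := ne_of_gt hn0
  set s11 : ℝ := ∑ k, A k * A k with hs11
  set s12 : ℝ := ∑ k, A k * B k with hs12
  set s22 : ℝ := ∑ k, B k * B k with hs22
  set t1 : ℝ := ∑ k, Y k * A k with ht1
  set t2 : ℝ := ∑ k, Y k * B k with ht2
  set dd : ℝ := s11 * s22 - s12 * s12 with hdd
  have hddne : dd ≠ 0 := by simpa [Dfun, hdd, hs11, hs12, hs22] using hD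
  have hNne : s11 * t2 - s12 * t1 ≠ 0 := by simpa [Nfun, hs11, hs12, ht1, ht2] using hN
  -- entries of Sig
  have entry : ∀ p q : Fin 2, Sig p q = (n:ℝ)⁻¹ * ∑ k, (![A k, B k] p * ![A k, B k] q) := by
    intro p q
    rw [hSig]
    simp [Matrix.sum_apply]
  have h00 : Sig 0 0 = (n:ℝ)⁻¹ * s11 := by rw [entry]; simp [hs11]
  have h01 : Sig 0 1 = (n:ℝ)⁻¹ * s12 := by rw [entry]; simp [hs12]
  have h10 : Sig 1 0 = (n:ℝ)⁻¹ * s12 := by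
    rw [entry]; simp [hs12, mul_comm]
  have h11 : Sig 1 1 = (n:ℝ)⁻¹ * s22 := by rw [entry]; simp [hs22]
  have hv0 : v 0 = (n:ℝ)⁻¹ * t1 := by
    rw [hv]; simp [ht1, Finset.sum_apply]
  have hv1 : v 1 = (n:ℝ)⁻¹ * t2 := by
    rw [hv]; simp [ht2, Finset.sum_apply]
  have hdet : Sig.det = (n:ℝ)⁻¹ * (n:ℝ)⁻¹ * dd := by
    rw [Matrix.det_fin_two, h00, h01, h10, h11, hdd]; ring
  have hdetne : Sig.det ≠ 0 := by
    rw [hdet]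
    exact mul_ne_zero (mul_ne_zero (inv_ne_zero hnne) (inv_ne_zero hnne)) hddne
  have hunit : IsUnit Sig := (Matrix.isUnit_iff_isUnit_det Sig).mpr (isUnit_iff_ne_zero.mpr hdetne)
  set w1 : ℝ := (s22 * t1 - s12 * t2) / dd with hw1
  set w2 : ℝ := (s11 * t2 - s12 * t1) / dd with hw2
  -- inverse mulVec
  have hwv : Sig⁻¹.mulVec v = ![w1, w2] := by
    funext i
    rw [Matrix.inv_def, Matrix.adjugate_fin_two]
    fin_cases i <;>
      · simp only [Matrix.mulVec, dotProduct, Fin.sum_univ_two, Ring.inverse_eq_inv',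
          Matrix.smul_apply, Matrix.cons_val_zero, Matrix.cons_val_one, Matrix.head_cons,
          Matrix.cons_val', Matrix.empty_val', Matrix.cons_val_fin_one, Matrix.head_fin_const, Matrix.of_apply, Fin.zero_eta, Fin.mk_one,
          smul_eq_mul, hdet, h00, h01, h10, h11, hv0, hv1, hw1, hw2]
        field_simp
        ring
  have hw2ne : w2 ≠ 0 := by
    rw [hw2]
    exact div_ne_zero hNne hddne
  -- normal equations
  have hne1 : s11 * w1 + s12 * w2 = t1 := by
    rw [hw1, hw2]; field_simp; ring
  have hne2 : s12 * w1 + s22 * w2 = t2 := by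
    rw [hw1, hw2]; field_simp; ring
  -- quadratic expansion
  have hexp : ∀ u : Fin 2 → ℝ, ∑ k, (Y k - u 0 * A k - u 1 * B k)^2 =
      (∑ k, Y k * Y k) - 2 * u 0 * t1 - 2 * u 1 * t2 + (u 0)^2 * s11
        + 2 * (u 0 * u 1) * s12 + (u 1)^2 * s22 := by
    intro u
    have e1 : ∀ k, (Y k - u 0 * A k - u 1 * B k)^2 =
        Y k * Y k - 2 * u 0 * (Y k * A k) - 2 * u 1 * (Y k * B k)
          + (u 0)^2 * (A k * A k) + 2 * (u 0 * u 1) * (A k * B k)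
          + (u 1)^2 * (B k * B k) := fun k => by ring
    simp_rw [e1]
    rw [Finset.sum_add_distrib, Finset.sum_add_distrib, Finset.sum_add_distrib,
      Finset.sum_sub_distrib, Finset.sum_sub_distrib,
      ← Finset.mul_sum, ← Finset.mul_sum, ← Finset.mul_sum, ← Finset.mul_sum, ← Finset.mul_sum]
  have hquadsum : ∀ c e : ℝ, ∑ k, (c * A k + e * B k)^2 =
      c^2 * s11 + 2 * (c * e) * s12 + e^2 * s22 := by
    intro c e
    have e1 : ∀ k, (c * A k + e * B k)^2 =
        c^2 * (A k * A k) + 2 * (c * e) * (A k * B k) + e^2 * (B k * B k) := fun k => by ring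
    simp_rw [e1]
    rw [Finset.sum_add_distrib, Finset.sum_add_distrib,
      ← Finset.mul_sum, ← Finset.mul_sum, ← Finset.mul_sum]
  -- key identity
  have hkey : ∀ u : Fin 2 → ℝ, L u = L ![w1, w2]
      + (n:ℝ)⁻¹ * ∑ k, ((u 0 - w1) * A k + (u 1 - w2) * B k)^2 := by
    intro u
    rw [hL, hL, hexp, hexp, hquadsum]
    simp only [Matrix.cons_val_zero, Matrix.cons_val_one, Matrix.head_cons]
    have expand : ((∑ k, Y k * Y k) - 2 * u 0 * t1 - 2 * u 1 * t2 + (u 0)^2 * s11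
        + 2 * (u 0 * u 1) * s12 + (u 1)^2 * s22)
        = ((∑ k, Y k * Y k) - 2 * w1 * t1 - 2 * w2 * t2 + w1^2 * s11
        + 2 * (w1 * w2) * s12 + w2^2 * s22)
        + (((u 0 - w1))^2 * s11 + 2 * ((u 0 - w1) * (u 1 - w2)) * s12
          + ((u 1 - w2))^2 * s22) := by
      linear_combination (2 * (u 0 - w1)) * hne1 + (2 * (u 1 - w2)) * hne2
    rw [expand]
    ring
  refine ⟨hunit, fun w => ⟨fun hmin => ?_, fun hw => ?_⟩, by rw [hwv]; simpa using hw2ne⟩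
  · -- minimizer → w = Sig⁻¹ v
    rw [hwv]
    have h1 : L w ≤ L ![w1, w2] := hmin _
    have h2 : L ![w1, w2] ≤ L w := by
      rw [hkey w]
      have : (0:ℝ) ≤ (n:ℝ)⁻¹ * ∑ k, ((w 0 - w1) * A k + (w 1 - w2) * B k)^2 :=
        mul_nonneg (by positivity) (Finset.sum_nonneg fun k _ => sq_nonneg _)
      linarith
    have heq : L w = L ![w1, w2] := le_antisymm h1 h2
    have hsum0 : ∑ k, ((w 0 - w1) * A k + (w 1 - w2) * B k)^2 = 0 := by
      have hkw := hkey w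
      rw [heq] at hkw
      have h3 : (n:ℝ)⁻¹ * ∑ k, ((w 0 - w1) * A k + (w 1 - w2) * B k)^2 = 0 := by linarith
      rcases mul_eq_zero.mp h3 with h | h
      · exact absurd h (inv_ne_zero hnne)
      · exact h
    have hterm : ∀ k : Fin n, (w 0 - w1) * A k + (w 1 - w2) * B k = 0 := by
      intro k
      have h6 := (Finset.sum_eq_zero_iff_of_nonneg (fun k _ => sq_nonneg
        ((w 0 - w1) * A k + (w 1 - w2) * B k))).mp hsum0 k (Finset.mem_univ k)
      exact pow_eq_zero_iff (by norm_num) |>.mp h6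
    set c : ℝ := w 0 - w1 with hc
    set e : ℝ := w 1 - w2 with he
    have hz1 : s11 * c + s12 * e = 0 := by
      have h4 : ∑ k, A k * (c * A k + e * B k) = 0 :=
        Finset.sum_eq_zero fun k _ => by rw [hterm k, mul_zero]
      have h5 : ∑ k, A k * (c * A k + e * B k) = s11 * c + s12 * e := by
        have e1 : ∀ k, A k * (c * A k + e * B k) = c * (A k * A k) + e * (A k * B k) :=
          fun k => by ring
        simp_rw [e1]
        rw [Finset.sum_add_distrib, ← Finset.mul_sum, ← Finset.mul_sum, hs11, hs12]
        ring
      rw [← h5]; exact h4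
    have hz2 : s12 * c + s22 * e = 0 := by
      have h4 : ∑ k, B k * (c * A k + e * B k) = 0 :=
        Finset.sum_eq_zero fun k _ => by rw [hterm k, mul_zero]
      have h5 : ∑ k, B k * (c * A k + e * B k) = s12 * c + s22 * e := by
        have e1 : ∀ k, B k * (c * A k + e * B k) = c * (A k * B k) + e * (B k * B k) :=
          fun k => by ring
        simp_rw [e1]
        rw [Finset.sum_add_distrib, ← Finset.mul_sum, ← Finset.mul_sum, hs12, hs22]
        ring
      rw [← h5]; exact h4
    have hc0 : c = 0 := by
      have h7 : c * dd = 0 := by rw [hdd]; linear_combination s22 * hz1 - s12 * hz2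
      rcases mul_eq_zero.mp h7 with h | h
      · exact h
      · exact absurd h hddne
    have he0 : e = 0 := by
      have h7 : e * dd = 0 := by rw [hdd]; linear_combination s11 * hz2 - s12 * hz1
      rcases mul_eq_zero.mp h7 with h | h
      · exact h
      · exact absurd h hddne
    funext i
    fin_cases i
    · show w 0 = w1
      have h8 := hc0; rw [hc] at h8; linarith
    · show w 1 = w2
      have h8 := he0; rw [he] at h8; linarith
  · -- w = Sig⁻¹ v → minimizer
    intro u
    rw [hw, hwv, hkey u]
    have hnn : (0:ℝ) ≤ (n:ℝ)⁻¹ * ∑ k, ((u 0 - w1) * A k + (u 1 - w2) * B k)^2 :=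
      mul_nonneg (by positivity) (Finset.sum_nonneg fun k _ => sq_nonneg _)
    have hLw := hkey ![w1, w2]
    simp only [Matrix.cons_val_zero, Matrix.cons_val_one, Matrix.head_cons, sub_self,
      zero_mul, zero_add, add_zero, mul_zero, ne_eq] at hLw
    nlinarith [hLw]


/-- (Theorem 1, finite-sample part.) In the two-task Gaussian model with any `ρ ∈ [0,1]`
(in particular `ρ = 1/2`), for any `n ≥ 2` and i.i.d. copies `(A^i_k, A^j_k, Y_{i,k})` of
`(A^i, A^j, Y_i)`, almost surely the empirical Gram matrix `Σ̂` is invertible and the unique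
empirical least-squares minimizer `(ŵ₁, ŵ₂) = Σ̂⁻¹ v̂` places nonzero weight on the
non-causal feature: `ŵ₂ ≠ 0`. -/
theorem stmt_14
    {Ω : Type*} [MeasurableSpace Ω] (P : Measure Ω) [IsProbabilityMeasure P]
    (Yi S εi εj : Ω → ℝ)
    (hYim : Measurable Yi) (hSm : Measurable S)
    (hεim : Measurable εi) (hεjm : Measurable εj)
    (ρ σ a b : ℝ) (hρ : ρ ∈ Set.Icc (0 : ℝ) 1) (hσ : 0 < σ) (ha : a ≠ 0) (hb : b ≠ 0)
    (hindep : iIndepFun ![Yi, S, εi, εj] P)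
    (hYval : ∀ ω, Yi ω = 1 ∨ Yi ω = -1)
    (hY : P {ω | Yi ω = 1} = 1/2)
    (hSval : ∀ ω, S ω = 1 ∨ S ω = -1)
    (hS : P {ω | S ω = 1} = ENNReal.ofReal ρ)
    (hεi : Measure.map εi P = gaussianReal 0 ⟨σ^2, sq_nonneg σ⟩)
    (hεj : Measure.map εj P = gaussianReal 0 ⟨σ^2, sq_nonneg σ⟩)
    (n : ℕ) (hn : 2 ≤ n)
    (Ai' Aj' Yi' : Fin n → Ω → ℝ)
    (hAi'm : ∀ k, Measurable (Ai' k)) (hAj'm : ∀ k, Measurable (Aj' k))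
    (hYi'm : ∀ k, Measurable (Yi' k))
    (hiid_indep : iIndepFun
      (fun k ω => (Ai' k ω, Aj' k ω, Yi' k ω)) P)
    (hiid_law : ∀ k, Measure.map (fun ω => (Ai' k ω, Aj' k ω, Yi' k ω)) P
      = Measure.map (fun ω => (a * Yi ω + εi ω, b * (S ω * Yi ω) + εj ω, Yi ω)) P)
    (Sighat : Ω → Matrix (Fin 2) (Fin 2) ℝ)
    (hSighat : ∀ ω, Sighat ω = (n : ℝ)⁻¹ •
      ∑ k : Fin n, Matrix.of fun p q : Fin 2 =>
        ![Ai' k ω, Aj' k ω] p * ![Ai' k ω, Aj' k ω] q)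
    (vhat : Ω → Fin 2 → ℝ)
    (hvhat : ∀ ω, vhat ω = (n : ℝ)⁻¹ • ∑ k : Fin n, Yi' k ω • ![Ai' k ω, Aj' k ω])
    (L : Ω → (Fin 2 → ℝ) → ℝ)
    (hL : ∀ ω w, L ω w = (n : ℝ)⁻¹ *
      ∑ k : Fin n, (Yi' k ω - w 0 * Ai' k ω - w 1 * Aj' k ω)^2) :
    ∀ᵐ ω ∂P, IsUnit (Sighat ω) ∧
      (∀ w : Fin 2 → ℝ, (∀ u : Fin 2 → ℝ, L ω w ≤ L ω u) ↔
        w = (Sighat ω)⁻¹.mulVec (vhat ω)) ∧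
      ((Sighat ω)⁻¹.mulVec (vhat ω)) 1 ≠ 0 := by
  classical
  set γ : Measure ℝ := gaussianReal 0 ⟨σ^2, sq_nonneg σ⟩ with hγ
  have hvar : (⟨σ^2, sq_nonneg σ⟩ : NNReal) ≠ 0 := by
    intro h
    have := congrArg (fun x : NNReal => (x : ℝ)) h
    replace this : σ = 0 := pow_eq_zero_iff two_ne_zero |>.mp (this : σ ^ 2 = 0)
    exact absurd this (ne_of_gt hσ)
  have hγac : γ ≪ (volume : Measure ℝ) := gaussianReal_absolutelyContinuous 0 hvar
  haveI : IsProbabilityMeasure γ := by rw [hγ]; exact ProbabilityTheory.instIsProbabilityMeasureGaussianReal _ _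
  have hfm : ∀ i : Fin 4, Measurable (![Yi, S, εi, εj] i) := by
    intro i
    fin_cases i
    · exact hYim
    · exact hSm
    · exact hεim
    · exact hεjm
  set V : Ω → ℝ × ℝ := fun ω => (Yi ω, S ω) with hV
  set E : Ω → ℝ × ℝ := fun ω => (εi ω, εj ω) with hE
  have hVm : Measurable V := hYim.prodMk hSm
  have hEm : Measurable E := hεim.prodMk hεjm
  have hVE : IndepFun V E P := by
    have h := hindep.indepFun_prodMk_prodMk hfm 0 1 2 3
      (by decide) (by decide) (by decide) (by decide)
    exact h
  have hEij : IndepFun εi εj P := hindep.indepFun (show (2 : Fin 4) ≠ 3 by decide)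
  set G2 : Measure (ℝ × ℝ) := γ.prod γ with hG2
  haveI : IsProbabilityMeasure G2 := by rw [hG2]; infer_instance
  have hElaw : Measure.map E P = G2 := by
    rw [hE, (indepFun_iff_map_prod_eq_prod_map_map hεim.aemeasurable hεjm.aemeasurable).mp hEij,
      hεi, hεj]
  set Dm : Measure (ℝ × ℝ) := Measure.map V P with hDm
  haveI : IsProbabilityMeasure Dm := Measure.isProbabilityMeasure_map hVm.aemeasurable
  have hVElaw : Measure.map (fun ω => (V ω, E ω)) P = Dm.prod G2 := by
    rw [(indepFun_iff_map_prod_eq_prod_map_map hVm.aemeasurable hEm.aemeasurable).mp hVE, hElaw]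
  set g : (ℝ × ℝ) × (ℝ × ℝ) → ℝ × ℝ × ℝ :=
    fun z => (a * z.1.1 + z.2.1, b * (z.1.2 * z.1.1) + z.2.2, z.1.1) with hg
  have hgm : Measurable g := by fun_prop
  set ν3 : Measure (ℝ × ℝ × ℝ) := Measure.map g (Dm.prod G2) with hν3
  haveI : IsProbabilityMeasure ν3 := Measure.isProbabilityMeasure_map hgm.aemeasurable
  have hphi : Measure.map (fun ω => (a * Yi ω + εi ω, b * (S ω * Yi ω) + εj ω, Yi ω)) P
      = ν3 := by
    rw [hν3, ← hVElaw, Measure.map_map hgm (hVm.prodMk hEm)]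
    rfl
  set X : Ω → Fin n → ℝ × ℝ × ℝ := fun ω k => (Ai' k ω, Aj' k ω, Yi' k ω) with hX
  have hXkm : ∀ k, Measurable (fun ω => (Ai' k ω, Aj' k ω, Yi' k ω)) :=
    fun k => (hAi'm k).prodMk ((hAj'm k).prodMk (hYi'm k))
  have hXm : Measurable X := measurable_pi_lambda _ hXkm
  have hXlaw : Measure.map X P = Measure.pi (fun _ : Fin n => ν3) := by
    rw [hX, map_pi_of_iIndep P _ hXkm hiid_indep]
    congr 1
    funext k
    rw [hiid_law k, hphi]
  set Bad : Set (Fin n → ℝ × ℝ × ℝ) := {x | Dfun x * Nfun x = 0} with hBad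
  have hBadm : MeasurableSet Bad := by
    have : Bad = (fun x => Dfun x * Nfun x) ⁻¹' {0} := rfl
    rw [this]
    exact (measurable_Dfun.mul measurable_Nfun) (measurableSet_singleton 0)
  -- push through pi
  have hGbig : Measurable (fun (x : Fin n → (ℝ×ℝ)×(ℝ×ℝ)) k => g (x k)) :=
    measurable_pi_lambda _ (fun k => hgm.comp (measurable_pi_apply k))
  have hpi : Measure.pi (fun _ : Fin n => ν3)
      = Measure.map (fun (x : Fin n → (ℝ×ℝ)×(ℝ×ℝ)) k => g (x k))
          (Measure.pi fun _ : Fin n => Dm.prod G2) :=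
    ((MeasureTheory.measurePreserving_pi (fun _ : Fin n => Dm.prod G2) (fun _ => ν3)
      (fun _ => ⟨hgm, rfl⟩)).map_eq).symm
  have hPB : P (X ⁻¹' Bad) = 0 := by
    rw [← Measure.map_apply hXm hBadm, hXlaw, hpi, Measure.map_apply hGbig hBadm]
    set C : Set (Fin n → (ℝ×ℝ)×(ℝ×ℝ)) := (fun x k => g (x k)) ⁻¹' Bad with hC
    have hCm : MeasurableSet C := hGbig hBadm
    set ΦG := MeasurableEquiv.arrowProdEquivProdArrow (ℝ×ℝ) (ℝ×ℝ) (Fin n) with hΦG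
    have hΦ := MeasureTheory.measurePreserving_arrowProdEquivProdArrow (ℝ×ℝ) (ℝ×ℝ) (Fin n)
      (fun _ => Dm) (fun _ => G2)
    have hC'm : MeasurableSet (ΦG.symm ⁻¹' C) := ΦG.symm.measurable hCm
    have step1 : (Measure.pi fun _ : Fin n => Dm.prod G2) C
        = ((Measure.pi fun _ : Fin n => Dm).prod (Measure.pi fun _ : Fin n => G2))
            (ΦG.symm ⁻¹' C) := by
      rw [← hΦ.measure_preimage hC'm.nullMeasurableSet]
      congr 1
    rw [step1, MeasureTheory.Measure.measure_prod_null hC'm]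
    -- a.e. d has ±1 first coordinates
    have hTm : MeasurableSet {v : ℝ × ℝ | v.1 = 1 ∨ v.1 = -1} := by
      have : {v : ℝ × ℝ | v.1 = 1 ∨ v.1 = -1}
          = Prod.fst ⁻¹' {1} ∪ Prod.fst ⁻¹' {-1} := by
        ext v; simp [Set.mem_union]
      rw [this]
      exact (measurable_fst (measurableSet_singleton 1)).union
        (measurable_fst (measurableSet_singleton (-1)))
    have hT1 : Dm {v : ℝ × ℝ | v.1 = 1 ∨ v.1 = -1} = 1 := by
      rw [hDm, Measure.map_apply hVm hTm]
      have : V ⁻¹' {v : ℝ × ℝ | v.1 = 1 ∨ v.1 = -1} = Set.univ := by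
        ext ω; simpa using hYval ω
      rw [this]
      exact measure_univ
    have hdfull : ∀ᵐ d ∂(Measure.pi fun _ : Fin n => Dm),
        ∀ k, (d k).1 = 1 ∨ (d k).1 = -1 := by
      rw [ae_iff]
      have hsub : {d : Fin n → ℝ × ℝ | ¬ ∀ k, (d k).1 = 1 ∨ (d k).1 = -1}
          ⊆ (Set.pi Set.univ fun _ : Fin n => {v : ℝ × ℝ | v.1 = 1 ∨ v.1 = -1})ᶜ := by
        intro d hd hmem
        exact hd fun k => hmem k (Set.mem_univ k)
      refine measure_mono_null hsub ?_
      rw [measure_compl (MeasurableSet.univ_pi fun _ => hTm) (measure_ne_top _ _),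
        Measure.pi_pi]
      simp [hT1]
    filter_upwards [hdfull] with d hd
    simp only [Pi.zero_apply]
    -- the slice in the gaussian directions
    set A : Set (Fin n → ℝ × ℝ) := Prod.mk d ⁻¹' (ΦG.symm ⁻¹' C) with hA
    have hAm : MeasurableSet A := measurable_prodMk_left hC'm
    set Ψ := MeasurableEquiv.arrowProdEquivProdArrow ℝ ℝ (Fin n) with hΨdef
    have hΨ := MeasureTheory.measurePreserving_arrowProdEquivProdArrow ℝ ℝ (Fin n)
      (fun _ => γ) (fun _ => γ)
    set Θ := MeasurableEquiv.sumPiEquivProdPi (fun _ : Fin n ⊕ Fin n => ℝ) with hΘdef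
    have hΘ := MeasureTheory.measurePreserving_sumPiEquivProdPi
      (X := fun _ : Fin n ⊕ Fin n => ℝ) (μ := fun _ => γ)
    have hA'm : MeasurableSet (Ψ.symm ⁻¹' A) := Ψ.symm.measurable hAm
    have hA''m : MeasurableSet (Θ ⁻¹' (Ψ.symm ⁻¹' A)) := Θ.measurable hA'm
    have step2 : (Measure.pi fun _ : Fin n => G2) A
        = ((Measure.pi fun _ : Fin n => γ).prod (Measure.pi fun _ : Fin n => γ))
            (Ψ.symm ⁻¹' A) := by
      rw [← hΨ.measure_preimage hA'm.nullMeasurableSet]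
      congr 1
    have step3 : ((Measure.pi fun _ : Fin n => γ).prod (Measure.pi fun _ : Fin n => γ))
        (Ψ.symm ⁻¹' A) = (Measure.pi fun _ : Fin n ⊕ Fin n => γ) (Θ ⁻¹' (Ψ.symm ⁻¹' A)) := by
      rw [← hΘ.measure_preimage hA'm.nullMeasurableSet]
    rw [step2, step3]
    obtain ⟨q, hq0, hqev⟩ := slice_poly n hn a b d hd
    have hsetq : Θ ⁻¹' (Ψ.symm ⁻¹' A) = {z | MvPolynomial.eval z q = 0} := by
      ext z
      simp only [Set.mem_preimage, Set.mem_setOf_eq, hA, hC, hBad]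
      rw [hqev]
      constructor
      · intro h; exact h
      · intro h; exact h
    rw [hsetq]
    exact mvpoly_null (fun _ => γ) (fun _ => inferInstance) (fun _ => hγac) q hq0
  -- conclude
  rw [ae_iff]
  refine measure_mono_null ?_ hPB
  intro ω hω
  simp only [Set.mem_setOf_eq] at hω
  by_contra hcon
  apply hω
  have hmul : Dfun (X ω) * Nfun (X ω) ≠ 0 := hcon
  have hDne : Dfun (X ω) ≠ 0 := fun h => hmul (by rw [h, zero_mul])
  have hNne : Nfun (X ω) ≠ 0 := fun h => hmul (by rw [h, mul_zero])
  exact deterministic_part hn (fun k => Ai' k ω) (fun k => Aj' k ω) (fun k => Yi' k ω)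
    (Sighat ω) (hSighat ω) (vhat ω) (hvhat ω) (L ω) (hL ω) hDne hNne
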